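/- Let φ > 0 be real, set α = coth(2φ), and let λ = x + iy with x, y real and cosh(4λ) ≠ 1. Then the function G(λ) = (2/sinh(2λ))·(α + coth(2λ)) satisfies −Im G(λ) = (4/(sinh(2φ)·|cosh(4λ) − 1|²))·( sinh(4x)·sinh(2(x+φ))·cos(2y)·sin(4y) − (cosh(4x)·cos(4y) − 1)·cosh(2(x+φ))·sin(2y) ). -/

import Mathlib

open Complex Real

/-- The analytic continuation of the derivative of the phase function:
`G(λ) = (2/sinh(2λ)) (α + coth(2λ))`. -/
noncomputable def phaseDeriv (α : ℝ) (l : ℂ) : ℂ :=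
  (2 / Complex.sinh (2 * l)) * ((α : ℂ) + Complex.cosh (2 * l) / Complex.sinh (2 * l))

lemma sinh_ofReal_add_ofReal_mul_I (a b : ℝ) :
    Complex.sinh ((a : ℂ) + (b : ℂ) * Complex.I) =
      ((Real.sinh a * Real.cos b : ℝ) : ℂ)
        + ((Real.cosh a * Real.sin b : ℝ) : ℂ) * Complex.I := by
  rw [Complex.sinh_add, Complex.sinh_mul_I, Complex.cosh_mul_I]
  push_cast
  ring

lemma cosh_ofReal_add_ofReal_mul_I (a b : ℝ) :
    Complex.cosh ((a : ℂ) + (b : ℂ) * Complex.I) =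
      ((Real.cosh a * Real.cos b : ℝ) : ℂ)
        + ((Real.sinh a * Real.sin b : ℝ) : ℂ) * Complex.I := by
  rw [Complex.cosh_add, Complex.sinh_mul_I, Complex.cosh_mul_I]
  push_cast
  ring

/-- For `φ > 0`, `α = coth(2φ)` and `λ = x + iy` with `cosh(4λ) ≠ 1`:
`-Im G(λ) = (4/(sinh(2φ)|cosh(4λ) - 1|²)) (sinh(4x) sinh(2(x+φ)) cos(2y) sin(4y)
  - (cosh(4x) cos(4y) - 1) cosh(2(x+φ)) sin(2y))`. -/
theorem im_phaseDeriv_formula (φ : ℝ) (hφ : 0 < φ) (α : ℝ)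
    (hα : α = Real.cosh (2 * φ) / Real.sinh (2 * φ)) (x y : ℝ)
    (hl : Complex.cosh (4 * ((x : ℂ) + Complex.I * (y : ℂ))) ≠ 1) :
    -(phaseDeriv α ((x : ℂ) + Complex.I * (y : ℂ))).im =
      (4 / (Real.sinh (2 * φ) *
        ‖Complex.cosh (4 * ((x : ℂ) + Complex.I * (y : ℂ))) - 1‖ ^ 2)) *
      (Real.sinh (4 * x) * Real.sinh (2 * (x + φ)) * Real.cos (2 * y) * Real.sin (4 * y)
        - (Real.cosh (4 * x) * Real.cos (4 * y) - 1) * Real.cosh (2 * (x + φ))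
          * Real.sin (2 * y)) := by
  set l : ℂ := (x : ℂ) + Complex.I * (y : ℂ) with hldef
  have hsp : (0:ℝ) < Real.sinh (2 * φ) := Real.sinh_pos_iff.2 (by linarith)
  have hsp' : Real.sinh (2 * φ) ≠ 0 := ne_of_gt hsp
  have hcosh4 : Complex.cosh (4 * l) = 2 * Complex.sinh (2 * l) ^ 2 + 1 := by
    rw [show (4:ℂ) * l = 2 * (2 * l) by ring, Complex.cosh_two_mul, Complex.cosh_sq]
    ring
  have hs2 : Complex.sinh (2 * l) ≠ 0 := by
    intro h
    apply hl
    rw [hcosh4, h]; ring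
  have e1 : ((Real.sinh (2 * φ) : ℝ) : ℂ) = Complex.sinh (2 * (φ : ℂ)) := by
    rw [Complex.ofReal_sinh]; norm_cast
  have e2 : ((Real.cosh (2 * φ) : ℝ) : ℂ) = Complex.cosh (2 * (φ : ℂ)) := by
    rw [Complex.ofReal_cosh]; norm_cast
  have hspC : Complex.sinh (2 * (φ : ℂ)) ≠ 0 := by
    rw [← e1]; exact_mod_cast hsp'
  have key : phaseDeriv α l =
      4 * Complex.sinh (2 * l + 2 * (φ : ℂ)) /
        (((Real.sinh (2 * φ) : ℝ) : ℂ) * (Complex.cosh (4 * l) - 1)) := by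
    unfold phaseDeriv
    rw [hα, hcosh4, Complex.sinh_add]
    push_cast [e1, e2]
    field_simp
    ring
  rw [key]
  have h1 : 2 * l + 2 * (φ : ℂ) = ((2 * (x + φ) : ℝ) : ℂ) + ((2 * y : ℝ) : ℂ) * Complex.I := by
    rw [hldef]; push_cast; ring
  have h2 : (4 : ℂ) * l = ((4 * x : ℝ) : ℂ) + ((4 * y : ℝ) : ℂ) * Complex.I := by
    rw [hldef]; push_cast; ring
  rw [h1, h2, sinh_ofReal_add_ofReal_mul_I, cosh_ofReal_add_ofReal_mul_I]
  have hnsq : (Real.cosh (4*x) * Real.cos (4*y) - 1) ^ 2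
      + (Real.sinh (4*x) * Real.sin (4*y)) ^ 2 ≠ 0 := by
    intro h
    apply hl
    have ha : Real.cosh (4*x) * Real.cos (4*y) = 1 := by
      nlinarith [sq_nonneg (Real.cosh (4*x) * Real.cos (4*y) - 1),
        sq_nonneg (Real.sinh (4*x) * Real.sin (4*y))]
    have hb : Real.sinh (4*x) * Real.sin (4*y) = 0 := by
      nlinarith [sq_nonneg (Real.cosh (4*x) * Real.cos (4*y) - 1),
        sq_nonneg (Real.sinh (4*x) * Real.sin (4*y))]
    rw [h2, cosh_ofReal_add_ofReal_mul_I, ha, hb]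
    simp
  rw [Complex.sq_norm]
  have hQ1 : Complex.normSq ((((Real.cosh (4*x) * Real.cos (4*y) : ℝ) : ℂ)
        + ((Real.sinh (4*x) * Real.sin (4*y) : ℝ) : ℂ) * Complex.I) - 1)
      = (Real.cosh (4*x) * Real.cos (4*y) - 1) ^ 2
        + (Real.sinh (4*x) * Real.sin (4*y)) ^ 2 := by
    simp only [Complex.normSq_apply, Complex.add_re, Complex.add_im, Complex.sub_re,
      Complex.sub_im, Complex.mul_re, Complex.mul_im, Complex.ofReal_re,
      Complex.ofReal_im, Complex.I_re, Complex.I_im, Complex.one_re, Complex.one_im]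
    ring
  have hQ2 : Complex.normSq (((Real.sinh (2*φ) : ℝ) : ℂ) *
      (((((Real.cosh (4*x) * Real.cos (4*y) : ℝ) : ℂ)
        + ((Real.sinh (4*x) * Real.sin (4*y) : ℝ) : ℂ) * Complex.I)) - 1))
      = Real.sinh (2*φ) ^ 2 * ((Real.cosh (4*x) * Real.cos (4*y) - 1) ^ 2
        + (Real.sinh (4*x) * Real.sin (4*y)) ^ 2) := by
    rw [Complex.normSq_mul, hQ1]
    simp only [Complex.normSq_apply, Complex.ofReal_re, Complex.ofReal_im]
    ring
  rw [Complex.div_im, hQ2, hQ1]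
  simp only [Complex.mul_re, Complex.mul_im, Complex.sub_re, Complex.sub_im,
    Complex.add_re, Complex.add_im, Complex.ofReal_re, Complex.ofReal_im,
    Complex.one_re, Complex.one_im, Complex.I_re, Complex.I_im, Complex.re_ofNat, Complex.im_ofNat]
  field_simp
  ring
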